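/- Suppose mn = 0 and nm = 0 for all m ∈ M and n ∈ N (G is a trivial generalized matrix algebra). Let L be a Lie derivation of G. If L is proper then hA(a) ∈ π_B(Z(G)) for all a ∈ A and hB(b) ∈ π_A(Z(G)) for all b ∈ B. Conversely, if M is faithful and hA(a) ∈ π_B(Z(G)) for all a ∈ A and hB(b) ∈ π_A(Z(G)) for all b ∈ B, then L is proper. -/

import Mathlib

/-- `x` lies in the Peirce corner `A = eGe`. -/
def cA {G : Type*} [Ring G] (e x : G) : Prop := e * x * e = x

/-- `x` lies in the Peirce corner `B = fGf`, where `f = 1 - e`. -/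
def cB {G : Type*} [Ring G] (e x : G) : Prop := (1 - e) * x * (1 - e) = x

/-- `x` lies in the Peirce corner `M = eGf`. -/
def cM {G : Type*} [Ring G] (e x : G) : Prop := e * x * (1 - e) = x

/-- `x` lies in the Peirce corner `N = fGe`. -/
def cN {G : Type*} [Ring G] (e x : G) : Prop := (1 - e) * x * e = x

/-- `z` lies in the center `Z(G)`. -/
def Ctr {G : Type*} [Ring G] (z : G) : Prop := ∀ x : G, z * x = x * z

/-- `L` is a Lie derivation of `G` (with respect to the commutator `[x,y] = xy - yx`). -/
def IsLieDer {R : Type*} [CommRing R] {G : Type*} [Ring G] [Algebra R G]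
    (L : G →ₗ[R] G) : Prop :=
  ∀ x y : G, L (x * y - y * x) = L x * y - y * L x + (x * L y - L y * x)

/-- `D` is a derivation of `G`. -/
def IsDer {R : Type*} [CommRing R] {G : Type*} [Ring G] [Algebra R G]
    (D : G →ₗ[R] G) : Prop :=
  ∀ x y : G, D (x * y) = D x * y + x * D y

/-- `L` is a proper Lie derivation: `L = D + τ` for a derivation `D` and a central-valued
`τ` vanishing on all commutators. -/
def IsProper {R : Type*} [CommRing R] {G : Type*} [Ring G] [Algebra R G]
    (L : G →ₗ[R] G) : Prop :=
  ∃ D τ : G →ₗ[R] G, IsDer D ∧ (∀ x : G, Ctr (τ x)) ∧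
    (∀ x y : G, τ (x * y - y * x) = 0) ∧ L = D + τ


/-- `M = eGf` is a faithful `(A,B)`-bimodule. -/
def FaithfulM {G : Type*} [Ring G] (e : G) : Prop :=
  (∀ a : G, cA e a → (∀ m : G, cM e m → a * m = 0) → a = 0) ∧
  (∀ b : G, cB e b → (∀ m : G, cM e m → m * b = 0) → b = 0)

section Toolbox
variable {G : Type*} [Ring G] {e : G}

lemma hfe' (he : e * e = e) : (1 - e) * e = 0 := by rw [sub_mul, one_mul, he, sub_self]
lemma hef' (he : e * e = e) : e * (1 - e) = 0 := by rw [mul_sub, mul_one, he, sub_self]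
lemma hff' (he : e * e = e) : (1 - e) * (1 - e) = 1 - e := by
  rw [mul_sub, mul_one, hfe' he, sub_zero]

/-- pair-rule helper -/
lemma pairL {p q r : G} (h : p * q = r) (x : G) : p * (q * x) = r * x := by
  rw [← mul_assoc, h]

lemma sideA (he : e * e = e) {a : G} (ha : cA e a) :
    e * a = a ∧ a * e = a ∧ (1 - e) * a = 0 ∧ a * (1 - e) = 0 := by
  have h1 : e * a = a := by
    conv_lhs => rw [← ha]
    rw [← mul_assoc, ← mul_assoc, he, ha]
  have h2 : a * e = a := by
    conv_lhs => rw [← ha]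
    rw [mul_assoc, mul_assoc, he, ← mul_assoc, ha]
  refine ⟨h1, h2, ?_, ?_⟩
  · rw [sub_mul, one_mul, h1, sub_self]
  · rw [mul_sub, mul_one, h2, sub_self]

lemma sideB (he : e * e = e) {b : G} (hb : cB e b) :
    (1 - e) * b = b ∧ b * (1 - e) = b ∧ e * b = 0 ∧ b * e = 0 := by
  have h1 : (1 - e) * b = b := by
    conv_lhs => rw [← hb]
    rw [← mul_assoc, ← mul_assoc, hff' he, hb]
  have h2 : b * (1 - e) = b := by
    conv_lhs => rw [← hb]
    rw [mul_assoc, mul_assoc, hff' he, ← mul_assoc, hb]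
  refine ⟨h1, h2, ?_, ?_⟩
  · have h3 : e * b = e * ((1 - e) * b) := by rw [h1]
    rw [h3, ← mul_assoc, hef' he, zero_mul]
  · have h3 : b * e = b * (1 - e) * e := by rw [h2]
    rw [h3, mul_assoc, hfe' he, mul_zero]

lemma sideM (he : e * e = e) {m : G} (hm : cM e m) :
    e * m = m ∧ m * (1 - e) = m ∧ m * e = 0 ∧ (1 - e) * m = 0 := by
  have h1 : e * m = m := by
    conv_lhs => rw [← hm]
    rw [← mul_assoc, ← mul_assoc, he, hm]
  have h2 : m * (1 - e) = m := by
    conv_lhs => rw [← hm]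
    rw [mul_assoc, mul_assoc, hff' he, ← mul_assoc, hm]
  refine ⟨h1, h2, ?_, ?_⟩
  · have h3 : m * e = m * (1 - e) * e := by rw [h2]
    rw [h3, mul_assoc, hfe' he, mul_zero]
  · have h3 : (1 - e) * m = (1 - e) * (e * m) := by rw [h1]
    rw [h3, ← mul_assoc, hfe' he, zero_mul]

lemma sideN (he : e * e = e) {n : G} (hn : cN e n) :
    (1 - e) * n = n ∧ n * e = n ∧ e * n = 0 ∧ n * (1 - e) = 0 := by
  have h1 : (1 - e) * n = n := by
    conv_lhs => rw [← hn]
    rw [← mul_assoc, ← mul_assoc, hff' he, hn]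
  have h2 : n * e = n := by
    conv_lhs => rw [← hn]
    rw [mul_assoc, mul_assoc, he, ← mul_assoc, hn]
  refine ⟨h1, h2, ?_, ?_⟩
  · have h3 : e * n = e * ((1 - e) * n) := by rw [h1]
    rw [h3, ← mul_assoc, hef' he, zero_mul]
  · have h3 : n * (1 - e) = n * e * (1 - e) := by rw [h2]
    rw [h3, mul_assoc, hef' he, mul_zero]

lemma decomp (e x : G) :
    x = e * x * e + e * x * (1 - e) + (1 - e) * x * e + (1 - e) * x * (1 - e) := by
  noncomm_ring

lemma cA_sandwich (he : e * e = e) (x : G) : cA e (e * x * e) := by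
  unfold cA
  rw [← mul_assoc, ← mul_assoc, he, mul_assoc (e*x) e e, he]

lemma cM_sandwich (he : e * e = e) (x : G) : cM e (e * x * (1 - e)) := by
  unfold cM
  rw [← mul_assoc, ← mul_assoc, he, mul_assoc (e*x) (1-e) (1-e), hff' he]

lemma cN_sandwich (he : e * e = e) (x : G) : cN e ((1 - e) * x * e) := by
  unfold cN
  rw [← mul_assoc, ← mul_assoc, hff' he, mul_assoc ((1-e)*x) e e, he]

lemma cB_sandwich (he : e * e = e) (x : G) : cB e ((1 - e) * x * (1 - e)) := by
  unfold cB
  rw [← mul_assoc, ← mul_assoc, hff' he, mul_assoc ((1-e)*x) (1-e) (1-e), hff' he]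

end Toolbox
section Toolbox2
variable {G : Type*} [Ring G] {e : G}

/-- zero-product helper : if `c * q = q` and `p * c = 0` then `p * q = 0`. -/
lemma zhelp {p q c : G} (h1 : c * q = q) (h2 : p * c = 0) : p * q = 0 := by
  rw [← h1, ← mul_assoc, h2, zero_mul]

lemma prodIn {e1 e2 p q : G} (h1 : e1 * p = p) (h2 : q * e2 = q) :
    e1 * (p * q) * e2 = p * q := by
  rw [← mul_assoc, h1, mul_assoc, h2]

lemma ctr_add {z w : G} (hz : Ctr z) (hw : Ctr w) : Ctr (z + w) := by
  intro x; rw [add_mul, mul_add, hz x, hw x]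

lemma ctr_sub {z w : G} (hz : Ctr z) (hw : Ctr w) : Ctr (z - w) := by
  intro x; rw [sub_mul, mul_sub, hz x, hw x]

lemma ctr_zero : Ctr (0 : G) := by intro x; rw [zero_mul, mul_zero]

lemma ctr_smul {R : Type*} [CommRing R] [Algebra R G] (r : R) {z : G} (hz : Ctr z) :
    Ctr (r • z) := by
  intro x; rw [smul_mul_assoc, mul_smul_comm, hz x]

lemma ctr_corner1 (he : e * e = e) {z : G} (hz : Ctr z) : e * z * (1 - e) = 0 := by
  rw [mul_assoc, hz (1 - e), ← mul_assoc, mul_sub, mul_one, he, sub_self, zero_mul]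

lemma ctr_corner2 (he : e * e = e) {z : G} (hz : Ctr z) : (1 - e) * z * e = 0 := by
  rw [mul_assoc, hz e, ← mul_assoc, sub_mul, one_mul, he, sub_self, zero_mul]

lemma ctr_dec (he : e * e = e) {z : G} (hz : Ctr z) :
    z = e * z * e + (1 - e) * z * (1 - e) := by
  have h := decomp e z
  rw [ctr_corner1 he hz, ctr_corner2 he hz, add_zero, add_zero] at h
  exact h

lemma ctrM1 (he : e * e = e) {z m : G} (hz : Ctr z) (hm : cM e m) :
    (e * z * e) * m = m * z := by
  obtain ⟨hem, hmf, hme, hfm⟩ := sideM he hm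
  rw [mul_assoc, hem, mul_assoc, hz m, ← mul_assoc, hem]

lemma ctrM2 (he : e * e = e) {z m : G} (hz : Ctr z) (hm : cM e m) :
    m * ((1 - e) * z * (1 - e)) = m * z := by
  obtain ⟨hem, hmf, hme, hfm⟩ := sideM he hm
  rw [← mul_assoc, ← mul_assoc, hmf, ← hz m, mul_assoc, hmf, hz m]

lemma ctrN1 (he : e * e = e) {z n : G} (hz : Ctr z) (hn : cN e n) :
    ((1 - e) * z * (1 - e)) * n = n * z := by
  obtain ⟨hfn, hne, hen, hnf⟩ := sideN he hn
  rw [mul_assoc, hfn, mul_assoc, hz n, ← mul_assoc, hfn]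

lemma ctrN2 (he : e * e = e) {z n : G} (hz : Ctr z) (hn : cN e n) :
    n * (e * z * e) = n * z := by
  obtain ⟨hfn, hne, hen, hnf⟩ := sideN he hn
  rw [← mul_assoc, ← mul_assoc, hne, ← hz n, mul_assoc, hne, hz n]

end Toolbox2

section Toolbox3
variable {G : Type*} [Ring G] {e : G}

lemma cA_sub {x y : G} (h1 : cA e x) (h2 : cA e y) : cA e (x - y) := by
  unfold cA at *; rw [mul_sub, sub_mul, h1, h2]

lemma cB_sub {x y : G} (h1 : cB e x) (h2 : cB e y) : cB e (x - y) := by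
  unfold cB at *
  rw [mul_sub (1-e) x y, sub_mul ((1-e)*x) ((1-e)*y) (1-e), h1, h2]

end Toolbox3

section Toolbox4
variable {G : Type*} [Ring G] {e : G}

lemma cA_add {x y : G} (h1 : cA e x) (h2 : cA e y) : cA e (x + y) := by
  unfold cA at *; rw [mul_add, add_mul, h1, h2]

lemma cB_add {x y : G} (h1 : cB e x) (h2 : cB e y) : cB e (x + y) := by
  unfold cB at *
  rw [mul_add (1-e) x y, add_mul ((1-e)*x) ((1-e)*y) (1-e), h1, h2]

end Toolbox4


set_option maxHeartbeats 1600000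

/-- Corollary 4.1, first part: in a trivial generalized matrix algebra
(`MN = 0 = NM`), a proper Lie derivation `L` satisfies `hA(A) ⊆ π_B(Z(G))` and
`hB(B) ⊆ π_A(Z(G))`; the converse holds when `M` is faithful. -/
theorem stmt_9
    {R : Type*} [CommRing R] {G : Type*} [Ring G] [Algebra R G]
    (e : G) (he : e * e = e) (he0 : e ≠ 0) (he1 : e ≠ 1)
    (hM2 : ∀ x : G, cM e x → x + x = 0 → x = 0)
    (hN2 : ∀ x : G, cN e x → x + x = 0 → x = 0)
    (htriv : ∀ m n : G, cM e m → cN e n → m * n = 0 ∧ n * m = 0)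
    (L : G →ₗ[R] G) (hL : IsLieDer L) :
    (IsProper L →
      ((∀ a : G, cA e a →
          ∃ z : G, Ctr z ∧ (1 - e) * L a * (1 - e) = (1 - e) * z * (1 - e)) ∧
        (∀ b : G, cB e b → ∃ z : G, Ctr z ∧ e * L b * e = e * z * e))) ∧
    (FaithfulM e →
      ((∀ a : G, cA e a →
          ∃ z : G, Ctr z ∧ (1 - e) * L a * (1 - e) = (1 - e) * z * (1 - e)) ∧
        (∀ b : G, cB e b → ∃ z : G, Ctr z ∧ e * L b * e = e * z * e)) →
      IsProper L) := by
  constructor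
  · -- Forward direction
    rintro ⟨D, τ, hD, hCtr, hτc, hLD⟩
    have hLx : ∀ x, L x = D x + τ x := by
      intro x; rw [hLD]; rfl
    constructor
    · intro a ha
      obtain ⟨hea, hae, hfa, haf⟩ := sideA he ha
      refine ⟨τ a, hCtr a, ?_⟩
      have hDa : D a = D e * a + e * D a := by
        have h := hD e a; rwa [hea] at h
      have h0 : (1 - e) * D a * (1 - e) = 0 := by
        rw [hDa]
        simp only [mul_add, add_mul, mul_sub, sub_mul, mul_assoc, one_mul, mul_one,
          he, pairL he, hea, hae, pairL hae, mul_zero, zero_mul, sub_zero, zero_sub,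
          add_zero, zero_add, sub_self, neg_zero, neg_neg]
      rw [hLx a, mul_add, add_mul, h0, zero_add]
    · intro b hb
      obtain ⟨hfb, hbf, heb, hbe⟩ := sideB he hb
      refine ⟨τ b, hCtr b, ?_⟩
      have hDb : D b = D (1 - e) * b + (1 - e) * D b := by
        have h := hD (1 - e) b; rwa [hfb] at h
      have h0 : e * D b * e = 0 := by
        rw [hDb]
        simp only [mul_add, add_mul, mul_sub, sub_mul, mul_assoc, one_mul, mul_one,
          he, pairL he, heb, pairL heb, hbe, pairL hbe, mul_zero, zero_mul, sub_zero,
          zero_sub, add_zero, zero_add, sub_self, neg_zero, neg_neg]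
      rw [hLx b, mul_add, add_mul, h0, zero_add]
  · -- Converse
    rintro ⟨hf1, hf2⟩ ⟨hypA, hypB⟩
    have hcent_f0 : ∀ z : G, Ctr z → (1 - e) * z * (1 - e) = 0 → z = 0 := by
      intro z hz h0
      have hdg := ctr_dec he hz
      rw [h0, add_zero] at hdg
      refine hf1 z hdg.symm ?_
      intro m hm
      rw [hz m, ← ctrM2 he hz hm, h0, mul_zero]
    have hcent_e0 : ∀ z : G, Ctr z → e * z * e = 0 → z = 0 := by
      intro z hz h0
      have hdg := ctr_dec he hz
      rw [h0, zero_add] at hdg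
      refine hf2 z hdg.symm ?_
      intro m hm
      obtain ⟨hem, hmf, hme, hfm⟩ := sideM he hm
      rw [← hz m]
      nth_rewrite 1 [hdg]
      rw [mul_assoc, hfm, mul_zero]
    have huniqF : ∀ z w : G, Ctr z → Ctr w →
        (1 - e) * z * (1 - e) = (1 - e) * w * (1 - e) → z = w := by
      intro z w hz hw h
      have h2 := hcent_f0 (z - w) (ctr_sub hz hw)
        (by rw [mul_sub (1-e) z w, sub_mul ((1-e)*z) ((1-e)*w) (1-e), h, sub_self])
      exact sub_eq_zero.mp h2
    -- choose the central witnesses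
    have hexA : ∀ x : G, ∃ z : G, Ctr z ∧
        (1 - e) * z * (1 - e) = (1 - e) * L (e * x * e) * (1 - e) := by
      intro x
      obtain ⟨z, h1, h2⟩ := hypA (e * x * e) (cA_sandwich he x)
      exact ⟨z, h1, h2.symm⟩
    have hexB : ∀ x : G, ∃ z : G, Ctr z ∧
        e * z * e = e * L ((1 - e) * x * (1 - e)) * e := by
      intro x
      obtain ⟨z, h1, h2⟩ := hypB ((1 - e) * x * (1 - e)) (cB_sandwich he x)
      exact ⟨z, h1, h2.symm⟩
    choose ZA hZA1 hZA2 using hexA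
    choose ZB hZB1 hZB2 using hexB
    have huniqE : ∀ z w : G, Ctr z → Ctr w → e * z * e = e * w * e → z = w := by
      intro z w hz hw h
      have h2 := hcent_e0 (z - w) (ctr_sub hz hw)
        (by rw [mul_sub e z w, sub_mul (e*z) (e*w) e, h, sub_self])
      exact sub_eq_zero.mp h2
    -- linearity of ZA, ZB
    have hZAadd : ∀ x y : G, ZA (x + y) = ZA x + ZA y := by
      intro x y
      refine huniqF _ _ (hZA1 _) (ctr_add (hZA1 x) (hZA1 y)) ?_
      rw [hZA2]
      have hc : e * (x + y) * e = e * x * e + e * y * e := by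
        rw [mul_add, add_mul]
      rw [hc, map_add, mul_add ((1-e)) (L (e*x*e)) (L (e*y*e)),
        add_mul ((1-e) * L (e*x*e)) ((1-e) * L (e*y*e)) (1-e),
        ← hZA2, ← hZA2, mul_add (1-e) (ZA x) (ZA y),
        add_mul ((1-e) * ZA x) ((1-e) * ZA y) (1-e)]
    have hZAsmul : ∀ (r : R) (x : G), ZA (r • x) = r • ZA x := by
      intro r x
      refine huniqF _ _ (hZA1 _) (ctr_smul r (hZA1 x)) ?_
      rw [hZA2]
      have hc : e * (r • x) * e = r • (e * x * e) := by
        rw [mul_smul_comm, smul_mul_assoc]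
      rw [hc, map_smul, mul_smul_comm, smul_mul_assoc, ← hZA2,
        mul_smul_comm, smul_mul_assoc]
    have hZBadd : ∀ x y : G, ZB (x + y) = ZB x + ZB y := by
      intro x y
      refine huniqE _ _ (hZB1 _) (ctr_add (hZB1 x) (hZB1 y)) ?_
      rw [hZB2]
      have hc : (1-e) * (x + y) * (1-e) = (1-e) * x * (1-e) + (1-e) * y * (1-e) := by
        rw [mul_add, add_mul]
      rw [hc, map_add, mul_add e (L ((1-e)*x*(1-e))) (L ((1-e)*y*(1-e))),
        add_mul (e * L ((1-e)*x*(1-e))) (e * L ((1-e)*y*(1-e))) e,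
        ← hZB2, ← hZB2, mul_add e (ZB x) (ZB y),
        add_mul (e * ZB x) (e * ZB y) e]
    have hZBsmul : ∀ (r : R) (x : G), ZB (r • x) = r • ZB x := by
      intro r x
      refine huniqE _ _ (hZB1 _) (ctr_smul r (hZB1 x)) ?_
      rw [hZB2]
      have hc : (1-e) * (r • x) * (1-e) = r • ((1-e) * x * (1-e)) := by
        rw [mul_smul_comm, smul_mul_assoc]
      rw [hc, map_smul, mul_smul_comm, smul_mul_assoc, ← hZB2,
        mul_smul_comm, smul_mul_assoc]
    -- the central map τ
    set τ : G →ₗ[R] G :=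
      { toFun := fun x => ZA x + ZB x,
        map_add' := by
          intro x y
          show ZA (x + y) + ZB (x + y) = ZA x + ZB x + (ZA y + ZB y)
          rw [hZAadd, hZBadd]; abel,
        map_smul' := by
          intro r x
          show ZA (r • x) + ZB (r • x) = (RingHom.id R) r • (ZA x + ZB x)
          rw [RingHom.id_apply, hZAsmul, hZBsmul, smul_add] } with hτdef
    have hτx : ∀ x : G, τ x = ZA x + ZB x := fun _ => rfl
    have hCtrτ : ∀ x : G, Ctr (τ x) := by
      intro x; rw [hτx]; exact ctr_add (hZA1 x) (hZB1 x)
    -- vanishing lemmas for ZA, ZB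
    have hZA0 : ∀ x : G, e * x * e = 0 → ZA x = 0 := by
      intro x h
      refine hcent_f0 _ (hZA1 x) ?_
      rw [hZA2, h, map_zero, mul_zero, zero_mul]
    have hZB0 : ∀ x : G, (1 - e) * x * (1 - e) = 0 → ZB x = 0 := by
      intro x h
      refine hcent_e0 _ (hZB1 x) ?_
      rw [hZB2, h, map_zero, mul_zero, zero_mul]
    -- corner multiplicativity (uses triviality)
    have hcornerA : ∀ x y : G, e * (x * y) * e = (e * x * e) * (e * y * e) := by
      intro x y
      have h0 := (htriv _ _ (cM_sandwich he x) (cN_sandwich he y)).1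
      have key : e * (x * y) * e =
          (e * x * e) * (e * y * e) + (e * x * (1 - e)) * ((1 - e) * y * e) := by
        have k2 : e * e + (1 - e) * (1 - e) = 1 := by
          rw [he, hff' he]; abel
        calc e * (x * y) * e = e * (x * ((e * e + (1 - e) * (1 - e)) * y)) * e := by
              rw [k2, one_mul]
          _ = (e * x * e) * (e * y * e) + (e * x * (1 - e)) * ((1 - e) * y * e) := by
              noncomm_ring
      rw [key, h0, add_zero]
    have hcornerB : ∀ x y : G,
        (1 - e) * (x * y) * (1 - e) = ((1 - e) * x * (1 - e)) * ((1 - e) * y * (1 - e)) := by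
      intro x y
      have h0 := (htriv _ _ (cM_sandwich he y) (cN_sandwich he x)).2
      have key : (1 - e) * (x * y) * (1 - e) =
          ((1 - e) * x * (1 - e)) * ((1 - e) * y * (1 - e)) +
            ((1 - e) * x * e) * (e * y * (1 - e)) := by
        have k2 : e * e + (1 - e) * (1 - e) = 1 := by
          rw [he, hff' he]; abel
        calc (1-e) * (x * y) * (1-e)
            = (1-e) * (x * ((e * e + (1 - e) * (1 - e)) * y)) * (1-e) := by
              rw [k2, one_mul]
          _ = ((1-e) * x * (1-e)) * ((1-e) * y * (1-e)) + ((1-e) * x * e) * (e * y * (1-e)) := by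
              noncomm_ring
      rw [key, h0, add_zero]
    -- inner derivation correction
    set u : G := (1 - e) * L e * e - e * L e * (1 - e) with hu
    set adu : G →ₗ[R] G := LinearMap.mulLeft R u - LinearMap.mulRight R u with hadu
    have haduder : IsDer adu := by
      intro x y
      show u * (x * y) - (x * y) * u = (u * x - x * u) * y + x * (u * y - y * u)
      noncomm_ring
    set L1 : G →ₗ[R] G := L - adu with hL1def
    have hL1x : ∀ x : G, L1 x = L x - (u * x - x * u) := fun _ => rfl
    have hL1 : IsLieDer L1 := by
      intro x y
      rw [hL1x, hL1x, hL1x, hL x y]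
      noncomm_ring
    have hue : u * e - e * u = e * L e * (1 - e) + (1 - e) * L e * e := by
      rw [hu]
      simp only [mul_add, add_mul, mul_sub, sub_mul, mul_assoc, mul_one, one_mul,
        mul_zero, zero_mul, add_zero, zero_add, sub_zero, zero_sub, sub_self,
        neg_zero, neg_neg, neg_mul, mul_neg, he, pairL he]
      abel
    have hL1e : L1 e = e * L e * e + (1 - e) * L e * (1 - e) := by
      rw [hL1x e, hue]
      nth_rewrite 1 [decomp e (L e)]
      abel
    have hF4 : ∀ a : G, cA e a → e * L1 a * (1 - e) = 0 ∧ (1 - e) * L1 a * e = 0 := by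
      intro a ha
      obtain ⟨hea, hae, hfa, haf⟩ := sideA he ha
      have hc : e * a - a * e = 0 := by rw [hea, hae, sub_self]
      have hE := hL1 e a
      rw [hc, map_zero, hL1e] at hE
      constructor
      · have h2 := congrArg (fun t => e * t * (1 - e)) hE
        simp only [mul_add, add_mul, mul_sub, sub_mul, mul_assoc, mul_one, one_mul,
          mul_zero, zero_mul, add_zero, zero_add, sub_zero, zero_sub, sub_self,
          neg_zero, neg_neg, neg_mul, mul_neg, he, pairL he,
          hea, pairL hea, hae, pairL hae] at h2 ⊢
        abel_nf at h2 ⊢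
        exact h2.symm
      · have h2 := congrArg (fun t => (1 - e) * t * e) hE
        simp only [mul_add, add_mul, mul_sub, sub_mul, mul_assoc, mul_one, one_mul,
          mul_zero, zero_mul, add_zero, zero_add, sub_zero, zero_sub, sub_self,
          neg_zero, neg_neg, neg_mul, mul_neg, he, pairL he,
          hea, pairL hea, hae, pairL hae] at h2
        abel_nf at h2
        simp only [neg_one_zsmul, ← sub_eq_add_neg, ← hL1def] at h2
        have hXY := neg_add_eq_zero.mp h2.symm
        rw [sub_mul, one_mul, sub_mul, mul_assoc]
        exact sub_eq_zero.mpr hXY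
    have hF5 : ∀ b : G, cB e b → e * L1 b * (1 - e) = 0 ∧ (1 - e) * L1 b * e = 0 := by
      intro b hb
      obtain ⟨hfb, hbf, heb, hbe⟩ := sideB he hb
      have hc : e * b - b * e = 0 := by rw [heb, hbe, sub_self]
      have hE := hL1 e b
      rw [hc, map_zero, hL1e] at hE
      constructor
      · have h2 := congrArg (fun t => e * t * (1 - e)) hE
        simp only [mul_add, add_mul, mul_sub, sub_mul, mul_assoc, mul_one, one_mul,
          mul_zero, zero_mul, add_zero, zero_add, sub_zero, zero_sub, sub_self,
          neg_zero, neg_neg, neg_mul, mul_neg, he, pairL he,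
          heb, pairL heb, hbe, pairL hbe] at h2 ⊢
        abel_nf at h2 ⊢
        exact h2.symm
      · have h2 := congrArg (fun t => (1 - e) * t * e) hE
        simp only [mul_add, add_mul, mul_sub, sub_mul, mul_assoc, mul_one, one_mul,
          mul_zero, zero_mul, add_zero, zero_add, sub_zero, zero_sub, sub_self,
          neg_zero, neg_neg, neg_mul, mul_neg, he, pairL he,
          heb, pairL heb, hbe, pairL hbe] at h2
        abel_nf at h2
        simp only [neg_one_zsmul, ← sub_eq_add_neg, ← hL1def] at h2
        have hXY := neg_add_eq_zero.mp h2.symm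
        rw [sub_mul, one_mul, sub_mul, mul_assoc]
        exact sub_eq_zero.mpr hXY
    have hF2 : ∀ m : G, cM e m → cM e (L1 m) := by
      intro m hm
      obtain ⟨hem, hmf, hme, hfm⟩ := sideM he hm
      have hc : e * m - m * e = m := by rw [hem, hme, sub_zero]
      have hE := hL1 e m
      rw [hc, hL1e] at hE
      have hA0 : e * L1 m * e = 0 := by
        have h2 := congrArg (fun t => e * t * e) hE
        simp only [mul_add, add_mul, mul_sub, sub_mul, mul_assoc, mul_one, one_mul,
          mul_zero, zero_mul, add_zero, zero_add, sub_zero, zero_sub, sub_self,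
          neg_zero, neg_neg, neg_mul, mul_neg, he, pairL he,
          hem, pairL hem, hme, pairL hme] at h2
        rw [mul_assoc]
        exact h2
      have hB0 : (1 - e) * L1 m * (1 - e) = 0 := by
        have h2 := congrArg (fun t => (1 - e) * t * (1 - e)) hE
        simp only [mul_add, add_mul, mul_sub, sub_mul, mul_assoc, mul_one, one_mul,
          mul_zero, zero_mul, add_zero, zero_add, sub_zero, zero_sub, sub_self,
          neg_zero, neg_neg, neg_mul, mul_neg, he, pairL he,
          hem, pairL hem, hme, pairL hme] at h2 ⊢
        abel_nf at h2 ⊢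
        simp only [neg_one_zsmul, ← sub_eq_add_neg, ← hL1def] at h2 ⊢
        exact h2
      have hN0 : (1 - e) * L1 m * e = 0 := by
        have h2 := congrArg (fun t => (1 - e) * t * e) hE
        simp only [mul_add, add_mul, mul_sub, sub_mul, mul_assoc, mul_one, one_mul,
          mul_zero, zero_mul, add_zero, zero_add, sub_zero, zero_sub, sub_self,
          neg_zero, neg_neg, neg_mul, mul_neg, he, pairL he,
          hem, pairL hem, hme, pairL hme] at h2
        have h3 : ((1-e) * L1 m * e) + ((1-e) * L1 m * e) = 0 := by
          simp only [mul_add, add_mul, mul_sub, sub_mul, mul_assoc, mul_one, one_mul,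
            mul_zero, zero_mul, add_zero, zero_add, sub_zero, zero_sub, sub_self,
            neg_zero, neg_neg, neg_mul, mul_neg, he, pairL he,
            hem, pairL hem, hme, pairL hme]
          abel_nf
          abel_nf at h2
          simp only [neg_one_zsmul, ← sub_eq_add_neg, ← hL1def] at h2 ⊢
          have h4 := sub_eq_zero.mpr h2
          abel_nf at h4
          exact h4
        exact hN2 _ (cN_sandwich he (L1 m)) h3
      show e * L1 m * (1 - e) = L1 m
      nth_rewrite 2 [decomp e (L1 m)]
      rw [hA0, hN0, hB0, zero_add, add_zero, add_zero]
    have hF3 : ∀ n : G, cN e n → cN e (L1 n) := by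
      intro n hn
      obtain ⟨hfn, hne, hen, hnf⟩ := sideN he hn
      have hc : e * n - n * e = -n := by rw [hen, hne, zero_sub]
      have hE := hL1 e n
      rw [hc, map_neg, hL1e] at hE
      have hA0 : e * L1 n * e = 0 := by
        have h2 := congrArg (fun t => e * t * e) hE
        simp only [mul_add, add_mul, mul_sub, sub_mul, mul_assoc, mul_one, one_mul,
          mul_zero, zero_mul, add_zero, zero_add, sub_zero, zero_sub, sub_self,
          neg_zero, neg_neg, neg_mul, mul_neg, he, pairL he,
          hen, pairL hen, hne, pairL hne] at h2 ⊢
        exact neg_eq_zero.mp h2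
      have hB0 : (1 - e) * L1 n * (1 - e) = 0 := by
        have h2 := congrArg (fun t => (1 - e) * t * (1 - e)) hE
        simp only [mul_add, add_mul, mul_sub, sub_mul, mul_assoc, mul_one, one_mul,
          mul_zero, zero_mul, add_zero, zero_add, sub_zero, zero_sub, sub_self,
          neg_zero, neg_neg, neg_mul, mul_neg, he, pairL he,
          hen, pairL hen, hne, pairL hne] at h2 ⊢
        abel_nf at h2 ⊢
        simp only [neg_one_zsmul, ← sub_eq_add_neg, ← hL1def] at h2 ⊢
        have h4 := congrArg Neg.neg h2
        rw [neg_zero] at h4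
        abel_nf at h4 ⊢
        simp only [neg_one_zsmul, ← sub_eq_add_neg, ← hL1def] at h4 ⊢
        exact h4
      have hM0 : e * L1 n * (1 - e) = 0 := by
        have h2 := congrArg (fun t => e * t * (1 - e)) hE
        simp only [mul_add, add_mul, mul_sub, sub_mul, mul_assoc, mul_one, one_mul,
          mul_zero, zero_mul, add_zero, zero_add, sub_zero, zero_sub, sub_self,
          neg_zero, neg_neg, neg_mul, mul_neg, he, pairL he,
          hen, pairL hen, hne, pairL hne] at h2
        have h3 : (e * L1 n * (1 - e)) + (e * L1 n * (1 - e)) = 0 := by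
          simp only [mul_add, add_mul, mul_sub, sub_mul, mul_assoc, mul_one, one_mul,
          mul_zero, zero_mul, add_zero, zero_add, sub_zero, zero_sub, sub_self,
          neg_zero, neg_neg, neg_mul, mul_neg, he, pairL he,
            hen, pairL hen, hne, pairL hne]
          abel_nf
          abel_nf at h2
          simp only [neg_one_zsmul, ← sub_eq_add_neg, ← hL1def] at h2 ⊢
          have h4 := sub_eq_zero.mpr h2
          have h5 := congrArg Neg.neg h4
          rw [neg_zero] at h5
          abel_nf at h5 ⊢
          exact h5
        exact hM2 _ (cM_sandwich he (L1 n)) h3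
      show (1 - e) * L1 n * e = L1 n
      nth_rewrite 2 [decomp e (L1 n)]
      rw [hA0, hM0, hB0, zero_add, zero_add, add_zero]
    have hZA2L1 : ∀ a : G, cA e a → (1 - e) * ZA a * (1 - e) = (1 - e) * L1 a * (1 - e) := by
      intro a ha
      obtain ⟨hea, hae, hfa, haf⟩ := sideA he ha
      have h0 : (1 - e) * (u * a - a * u) * (1 - e) = 0 := by
        rw [hu]
        simp only [mul_add, add_mul, mul_sub, sub_mul, mul_assoc, mul_one, one_mul,
          mul_zero, zero_mul, add_zero, zero_add, sub_zero, zero_sub, sub_self,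
          neg_zero, neg_neg, neg_mul, mul_neg, he, pairL he,
          hea, pairL hea, hae, pairL hae]
      have key : (1 - e) * L1 a * (1 - e) = (1 - e) * L a * (1 - e) := by
        rw [hL1x a, mul_sub (1-e) (L a) (u * a - a * u),
          sub_mul ((1-e) * L a) ((1-e) * (u * a - a * u)) (1-e), h0, sub_zero]
      rw [key, hZA2, ha]
    have hZB2L1 : ∀ b : G, cB e b → e * ZB b * e = e * L1 b * e := by
      intro b hb
      obtain ⟨hfb, hbf, heb, hbe⟩ := sideB he hb
      have h0 : e * (u * b - b * u) * e = 0 := by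
        rw [hu]
        simp only [mul_add, add_mul, mul_sub, sub_mul, mul_assoc, mul_one, one_mul,
          mul_zero, zero_mul, add_zero, zero_add, sub_zero, zero_sub, sub_self,
          neg_zero, neg_neg, neg_mul, mul_neg, he, pairL he,
          heb, pairL heb, hbe, pairL hbe]
      have key : e * L1 b * e = e * L b * e := by
        rw [hL1x b, mul_sub e (L b) (u * b - b * u),
          sub_mul (e * L b) (e * (u * b - b * u)) e, h0, sub_zero]
      rw [key, hZB2, hb]
    have hdiagA : ∀ a : G, cA e a → L1 a = e * L1 a * e + (1 - e) * L1 a * (1 - e) := by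
      intro a ha
      nth_rewrite 1 [decomp e (L1 a)]
      rw [(hF4 a ha).1, (hF4 a ha).2, add_zero, add_zero]
    have hdiagB : ∀ b : G, cB e b → L1 b = e * L1 b * e + (1 - e) * L1 b * (1 - e) := by
      intro b hb
      nth_rewrite 1 [decomp e (L1 b)]
      rw [(hF5 b hb).1, (hF5 b hb).2, add_zero, add_zero]
    have hτcomm : ∀ x y : G, τ (x * y - y * x) = 0 := by
      intro x y
      rw [hτx]
      have hA : ZA (x * y - y * x) = 0 := by
        refine hcent_f0 _ (hZA1 _) ?_
        rw [hZA2]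
        have hc : e * (x * y - y * x) * e =
            (e * x * e) * (e * y * e) - (e * y * e) * (e * x * e) := by
          rw [mul_sub, sub_mul, hcornerA, hcornerA]
        rw [hc, hL (e * x * e) (e * y * e)]
        obtain ⟨hea, hae, hfa, haf⟩ := sideA he (cA_sandwich he x)
        obtain ⟨hea2, hae2, hfa2, haf2⟩ := sideA he (cA_sandwich he y)
        simp only [mul_add, add_mul, mul_sub, sub_mul, mul_assoc, mul_one, one_mul,
          mul_zero, zero_mul, add_zero, zero_add, sub_zero, zero_sub, sub_self,
          neg_zero, neg_neg, neg_mul, mul_neg, he, pairL he,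
          hea, pairL hea, hae, pairL hae, hea2, pairL hea2, hae2, pairL hae2]
      have hB : ZB (x * y - y * x) = 0 := by
        refine hcent_e0 _ (hZB1 _) ?_
        rw [hZB2]
        have hc : (1 - e) * (x * y - y * x) * (1 - e) =
            ((1-e) * x * (1-e)) * ((1-e) * y * (1-e)) -
              ((1-e) * y * (1-e)) * ((1-e) * x * (1-e)) := by
          rw [mul_sub (1-e) (x*y) (y*x), sub_mul ((1-e)*(x*y)) ((1-e)*(y*x)) (1-e),
            hcornerB, hcornerB]
        rw [hc, hL ((1-e) * x * (1-e)) ((1-e) * y * (1-e))]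
        obtain ⟨hfb, hbf, heb, hbe⟩ := sideB he (cB_sandwich he x)
        obtain ⟨hfb2, hbf2, heb2, hbe2⟩ := sideB he (cB_sandwich he y)
        simp only [mul_add, add_mul, mul_sub, sub_mul, mul_assoc, mul_one, one_mul,
          mul_zero, zero_mul, add_zero, zero_add, sub_zero, zero_sub, sub_self,
          neg_zero, neg_neg, neg_mul, mul_neg, he, pairL he,
          heb, pairL heb, hbe, pairL hbe, heb2, pairL heb2, hbe2, pairL hbe2]
      rw [hA, hB, add_zero]
    -- the candidate derivation on the corrected Lie derivation
    set Dl : G →ₗ[R] G := L1 - τ with hDldef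
    have hDlx : ∀ x : G, Dl x = L1 x - τ x := fun _ => rfl
    have hZAm0 : ∀ m : G, cM e m → ZA m = 0 := by
      intro m hm
      obtain ⟨hem, hmf, hme, hfm⟩ := sideM he hm
      exact hZA0 m (by rw [hem, hme])
    have hZBm0 : ∀ m : G, cM e m → ZB m = 0 := by
      intro m hm
      obtain ⟨hem, hmf, hme, hfm⟩ := sideM he hm
      exact hZB0 m (by rw [hfm, zero_mul])
    have hZAn0 : ∀ n : G, cN e n → ZA n = 0 := by
      intro n hn
      obtain ⟨hfn, hne, hen, hnf⟩ := sideN he hn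
      exact hZA0 n (by rw [hen, zero_mul])
    have hZBn0 : ∀ n : G, cN e n → ZB n = 0 := by
      intro n hn
      obtain ⟨hfn, hne, hen, hnf⟩ := sideN he hn
      exact hZB0 n (by rw [hfn, hnf])
    have hZBa0 : ∀ a : G, cA e a → ZB a = 0 := by
      intro a ha
      obtain ⟨hea, hae, hfa, haf⟩ := sideA he ha
      exact hZB0 a (by rw [hfa, zero_mul])
    have hZAb0 : ∀ b : G, cB e b → ZA b = 0 := by
      intro b hb
      obtain ⟨hfb, hbf, heb, hbe⟩ := sideB he hb
      exact hZA0 b (by rw [heb, zero_mul])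
    have hDlm : ∀ m : G, cM e m → Dl m = L1 m := by
      intro m hm
      rw [hDlx, hτx, hZAm0 m hm, hZBm0 m hm, add_zero, sub_zero]
    have hDln : ∀ n : G, cN e n → Dl n = L1 n := by
      intro n hn
      rw [hDlx, hτx, hZAn0 n hn, hZBn0 n hn, add_zero, sub_zero]
    have hDla : ∀ a : G, cA e a → Dl a = e * L1 a * e - e * ZA a * e := by
      intro a ha
      rw [hDlx, hτx, hZBa0 a ha, add_zero]
      nth_rewrite 1 [hdiagA a ha]
      nth_rewrite 1 [ctr_dec he (hZA1 a)]
      rw [hZA2L1 a ha]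
      abel
    have hDlb : ∀ b : G, cB e b →
        Dl b = (1 - e) * L1 b * (1 - e) - (1 - e) * ZB b * (1 - e) := by
      intro b hb
      rw [hDlx, hτx, hZAb0 b hb, zero_add]
      nth_rewrite 1 [hdiagB b hb]
      nth_rewrite 1 [ctr_dec he (hZB1 b)]
      rw [hZB2L1 b hb]
      abel
    have hcADl : ∀ a : G, cA e a → cA e (Dl a) := by
      intro a ha
      rw [hDla a ha]
      exact cA_sub (cA_sandwich he (L1 a)) (cA_sandwich he (ZA a))
    have hcBDl : ∀ b : G, cB e b → cB e (Dl b) := by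
      intro b hb
      rw [hDlb b hb]
      exact cB_sub (cB_sandwich he (L1 b)) (cB_sandwich he (ZB b))
    -- the four nontrivial product cases
    have KAM : ∀ a m : G, cA e a → cM e m → Dl (a * m) = Dl a * m + a * Dl m := by
      intro a m ha hm
      obtain ⟨hea, hae, hfa, haf⟩ := sideA he ha
      obtain ⟨hem, hmf, hme, hfm⟩ := sideM he hm
      have ham : cM e (a * m) := prodIn hea hmf
      have hma : m * a = 0 := zhelp hea hme
      have hE := hL1 a m
      rw [hma, sub_zero] at hE
      have hLma : L1 m * a = 0 := zhelp hea (sideM he (hF2 m hm)).2.2.1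
      have h1 : L1 a * m = (e * L1 a * e) * m := by
        nth_rewrite 1 [hdiagA a ha]
        rw [add_mul, mul_assoc ((1-e) * L1 a) (1-e) m, hfm, mul_zero, add_zero]
      have h2 : m * L1 a = m * ((1-e) * L1 a * (1-e)) := by
        nth_rewrite 1 [hdiagA a ha]
        rw [mul_add, show m * (e * L1 a * e) = 0 from by
          rw [← mul_assoc, ← mul_assoc, hme, zero_mul, zero_mul], zero_add]
      have h3 : m * ((1-e) * L1 a * (1-e)) = (e * ZA a * e) * m := by
        rw [← hZA2L1 a ha, ctrM2 he (hZA1 a) hm, ← ctrM1 he (hZA1 a) hm]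
      rw [hDlm (a*m) ham, hDla a ha, hDlm m hm, hE, h1, h2, h3, hLma, sub_zero,
        sub_mul (e * L1 a * e) (e * ZA a * e) m]
    have KMB : ∀ m b : G, cM e m → cB e b → Dl (m * b) = Dl m * b + m * Dl b := by
      intro m b hm hb
      obtain ⟨hem, hmf, hme, hfm⟩ := sideM he hm
      obtain ⟨hfb, hbf, heb, hbe⟩ := sideB he hb
      have hmb : cM e (m * b) := prodIn hem hbf
      have hbm : b * m = 0 := zhelp hem hbe
      have hE := hL1 m b
      rw [hbm, sub_zero] at hE
      have hbLm : b * L1 m = 0 := zhelp (sideM he (hF2 m hm)).1 hbe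
      have h1 : L1 b * m = (e * L1 b * e) * m := by
        nth_rewrite 1 [hdiagB b hb]
        rw [add_mul, mul_assoc ((1-e) * L1 b) (1-e) m, hfm, mul_zero, add_zero]
      have h2 : m * L1 b = m * ((1-e) * L1 b * (1-e)) := by
        nth_rewrite 1 [hdiagB b hb]
        rw [mul_add, show m * (e * L1 b * e) = 0 from by
          rw [← mul_assoc, ← mul_assoc, hme, zero_mul, zero_mul], zero_add]
      have h3 : (e * L1 b * e) * m = m * ((1-e) * ZB b * (1-e)) := by
        rw [← hZB2L1 b hb, ctrM1 he (hZB1 b) hm, ← ctrM2 he (hZB1 b) hm]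
      rw [hDlm (m*b) hmb, hDlm m hm, hDlb b hb, hE, hbLm, h2, h1, h3,
        mul_sub m ((1-e) * L1 b * (1-e)) ((1-e) * ZB b * (1-e))]
      abel
    have KNA : ∀ n a : G, cN e n → cA e a → Dl (n * a) = Dl n * a + n * Dl a := by
      intro n a hn ha
      obtain ⟨hfn, hne, hen, hnf⟩ := sideN he hn
      obtain ⟨hea, hae, hfa, haf⟩ := sideA he ha
      have hna : cN e (n * a) := prodIn hfn hae
      have han : a * n = 0 := zhelp hfn haf
      have hE := hL1 a n
      rw [han, zero_sub, map_neg] at hE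
      have hE2 := congrArg Neg.neg hE
      rw [neg_neg] at hE2
      have haLn : a * L1 n = 0 := zhelp (sideN he (hF3 n hn)).1 haf
      have h1 : L1 a * n = ((1-e) * L1 a * (1-e)) * n := by
        nth_rewrite 1 [hdiagA a ha]
        rw [add_mul, show (e * L1 a * e) * n = 0 from by
          rw [mul_assoc, hen, mul_zero], zero_add]
      have h2 : n * L1 a = n * (e * L1 a * e) := by
        nth_rewrite 1 [hdiagA a ha]
        rw [mul_add, show n * ((1-e) * L1 a * (1-e)) = 0 from by
          rw [← mul_assoc, ← mul_assoc, hnf, zero_mul, zero_mul], add_zero]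
      have h3 : ((1-e) * L1 a * (1-e)) * n = n * (e * ZA a * e) := by
        rw [← hZA2L1 a ha, ctrN1 he (hZA1 a) hn, ← ctrN2 he (hZA1 a) hn]
      rw [hDln (n*a) hna, hDln n hn, hDla a ha, hE2, haLn, h1, h2, h3,
        mul_sub n (e * L1 a * e) (e * ZA a * e)]
      abel
    have KBN : ∀ b n : G, cB e b → cN e n → Dl (b * n) = Dl b * n + b * Dl n := by
      intro b n hb hn
      obtain ⟨hfb, hbf, heb, hbe⟩ := sideB he hb
      obtain ⟨hfn, hne, hen, hnf⟩ := sideN he hn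
      have hbn : cN e (b * n) := prodIn hfb hne
      have hnb : n * b = 0 := zhelp hfb hnf
      have hE := hL1 n b
      rw [hnb, zero_sub, map_neg] at hE
      have hE2 := congrArg Neg.neg hE
      rw [neg_neg] at hE2
      have hLnb : L1 n * b = 0 := zhelp hfb (sideN he (hF3 n hn)).2.2.2
      have h1 : n * L1 b = n * (e * L1 b * e) := by
        nth_rewrite 1 [hdiagB b hb]
        rw [mul_add, show n * ((1-e) * L1 b * (1-e)) = 0 from by
          rw [← mul_assoc, ← mul_assoc, hnf, zero_mul, zero_mul], add_zero]
      have h2 : L1 b * n = ((1-e) * L1 b * (1-e)) * n := by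
        nth_rewrite 1 [hdiagB b hb]
        rw [add_mul, show (e * L1 b * e) * n = 0 from by
          rw [mul_assoc, hen, mul_zero], zero_add]
      have h3 : n * (e * L1 b * e) = ((1-e) * ZB b * (1-e)) * n := by
        rw [← hZB2L1 b hb, ctrN2 he (hZB1 b) hn, ← ctrN1 he (hZB1 b) hn]
      rw [hDln (b*n) hbn, hDlb b hb, hDln n hn, hE2, hLnb, h1, h3, h2,
        sub_mul ((1-e) * L1 b * (1-e)) ((1-e) * ZB b * (1-e)) n]
      abel
    -- trivial product helper
    have triv0 : ∀ x y : G, x * y = 0 → Dl x * y = 0 → x * Dl y = 0 →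
        Dl (x * y) = Dl x * y + x * Dl y := by
      intro x y h1 h2 h3
      rw [h1, map_zero, h2, h3, add_zero]
    -- the sixteen component cases
    have main : ∀ x y : G,
        (cA e x ∨ cM e x ∨ cN e x ∨ cB e x) →
        (cA e y ∨ cM e y ∨ cN e y ∨ cB e y) →
        Dl (x * y) = Dl x * y + x * Dl y := by
      intro x y hx hy
      rcases hx with hx|hx|hx|hx <;> rcases hy with hy|hy|hy|hy
      · -- A A : faithfulness
        have hxy : cA e (x * y) := prodIn (sideA he hx).1 (sideA he hy).2.1
        have key : ∀ m : G, cM e m →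
            (Dl (x * y) - (Dl x * y + x * Dl y)) * m = 0 := by
          intro m hm
          have hym : cM e (y * m) := prodIn (sideA he hy).1 (sideM he hm).2.1
          have k1 := KAM (x * y) m hxy hm
          have k2 := KAM x (y * m) hx hym
          have k3 := KAM y m hy hm
          have e1 : Dl (x * y) * m = Dl (x * y * m) - x * y * Dl m := by
            rw [k1]; abel
          have e2 : Dl x * (y * m) = Dl (x * (y * m)) - x * Dl (y * m) := by
            rw [k2]; abel
          have e3 : Dl y * m = Dl (y * m) - y * Dl m := by
            rw [k3]; abel
          rw [sub_mul, add_mul, e1, mul_assoc (Dl x) y m, e2, mul_assoc x (Dl y) m, e3,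
            mul_sub x (Dl (y*m)) (y * Dl m), ← mul_assoc x y (Dl m), ← mul_assoc x y m]
          abel
        have hc : cA e (Dl (x * y) - (Dl x * y + x * Dl y)) := by
          have c1 : cA e (Dl x * y) := prodIn (sideA he (hcADl x hx)).1 (sideA he hy).2.1
          have c2 : cA e (x * Dl y) := prodIn (sideA he hx).1 (sideA he (hcADl y hy)).2.1
          exact cA_sub (hcADl _ hxy) (cA_add c1 c2)
        exact sub_eq_zero.mp (hf1 _ hc key)
      · exact KAM x y hx hy
      · exact triv0 x y (zhelp (sideN he hy).1 (sideA he hx).2.2.2)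
          (zhelp (sideN he hy).1 (sideA he (hcADl x hx)).2.2.2)
          (by rw [hDln y hy]; exact zhelp (sideN he (hF3 y hy)).1 (sideA he hx).2.2.2)
      · exact triv0 x y (zhelp (sideB he hy).1 (sideA he hx).2.2.2)
          (zhelp (sideB he hy).1 (sideA he (hcADl x hx)).2.2.2)
          (zhelp (sideB he (hcBDl y hy)).1 (sideA he hx).2.2.2)
      · exact triv0 x y (zhelp (sideA he hy).1 (sideM he hx).2.2.1)
          (by rw [hDlm x hx]; exact zhelp (sideA he hy).1 (sideM he (hF2 x hx)).2.2.1)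
          (zhelp (sideA he (hcADl y hy)).1 (sideM he hx).2.2.1)
      · exact triv0 x y (zhelp (sideM he hy).1 (sideM he hx).2.2.1)
          (by rw [hDlm x hx]; exact zhelp (sideM he hy).1 (sideM he (hF2 x hx)).2.2.1)
          (by rw [hDlm y hy]; exact zhelp (sideM he (hF2 y hy)).1 (sideM he hx).2.2.1)
      · exact triv0 x y (htriv x y hx hy).1
          (by rw [hDlm x hx]; exact (htriv (L1 x) y (hF2 x hx) hy).1)
          (by rw [hDln y hy]; exact (htriv x (L1 y) hx (hF3 y hy)).1)
      · exact KMB x y hx hy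
      · exact KNA x y hx hy
      · exact triv0 x y (htriv y x hy hx).2
          (by rw [hDln x hx]; exact (htriv y (L1 x) hy (hF3 x hx)).2)
          (by rw [hDlm y hy]; exact (htriv (L1 y) x (hF2 y hy) hx).2)
      · exact triv0 x y (zhelp (sideN he hy).1 (sideN he hx).2.2.2)
          (by rw [hDln x hx]; exact zhelp (sideN he hy).1 (sideN he (hF3 x hx)).2.2.2)
          (by rw [hDln y hy]; exact zhelp (sideN he (hF3 y hy)).1 (sideN he hx).2.2.2)
      · exact triv0 x y (zhelp (sideB he hy).1 (sideN he hx).2.2.2)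
          (by rw [hDln x hx]; exact zhelp (sideB he hy).1 (sideN he (hF3 x hx)).2.2.2)
          (zhelp (sideB he (hcBDl y hy)).1 (sideN he hx).2.2.2)
      · exact triv0 x y (zhelp (sideA he hy).1 (sideB he hx).2.2.2)
          (zhelp (sideA he hy).1 (sideB he (hcBDl x hx)).2.2.2)
          (zhelp (sideA he (hcADl y hy)).1 (sideB he hx).2.2.2)
      · exact triv0 x y (zhelp (sideM he hy).1 (sideB he hx).2.2.2)
          (zhelp (sideM he hy).1 (sideB he (hcBDl x hx)).2.2.2)
          (by rw [hDlm y hy]; exact zhelp (sideM he (hF2 y hy)).1 (sideB he hx).2.2.2)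
      · exact KBN x y hx hy
      · -- B B : faithfulness
        have hxy : cB e (x * y) := prodIn (sideB he hx).1 (sideB he hy).2.1
        have key : ∀ m : G, cM e m →
            m * (Dl (x * y) - (Dl x * y + x * Dl y)) = 0 := by
          intro m hm
          have hmx : cM e (m * x) := prodIn (sideM he hm).1 (sideB he hx).2.1
          have k1 := KMB m (x * y) hm hxy
          have k2 := KMB (m * x) y hmx hy
          have k3 := KMB m x hm hx
          have e1 : m * Dl (x * y) = Dl (m * (x * y)) - Dl m * (x * y) := by
            rw [k1]; abel
          have e3 : m * Dl x = Dl (m * x) - Dl m * x := by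
            rw [k3]; abel
          have e2 : m * x * Dl y = Dl (m * x * y) - Dl (m * x) * y := by
            rw [k2]; abel
          rw [mul_sub, mul_add, e1, ← mul_assoc m (Dl x) y, e3, ← mul_assoc m x (Dl y),
            e2, sub_mul (Dl (m*x)) (Dl m * x) y, ← mul_assoc m x y, mul_assoc (Dl m) x y]
          abel
        have hc : cB e (Dl (x * y) - (Dl x * y + x * Dl y)) := by
          have c1 : cB e (Dl x * y) := prodIn (sideB he (hcBDl x hx)).1 (sideB he hy).2.1
          have c2 : cB e (x * Dl y) := prodIn (sideB he hx).1 (sideB he (hcBDl y hy)).2.1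
          exact cB_sub (hcBDl _ hxy) (cB_add c1 c2)
        exact sub_eq_zero.mp (hf2 _ hc key)
    -- Dl is a derivation on all of G by additivity
    have hDer : ∀ x y : G, Dl (x * y) = Dl x * y + x * Dl y := by
      have addx : ∀ x1 x2 y : G, Dl (x1*y) = Dl x1*y + x1*Dl y →
          Dl (x2*y) = Dl x2*y + x2*Dl y →
          Dl ((x1+x2)*y) = Dl (x1+x2)*y + (x1+x2)*Dl y := by
        intro x1 x2 y h1 h2
        rw [add_mul, map_add, h1, h2, map_add, add_mul, add_mul]
        abel
      have addy : ∀ x y1 y2 : G, Dl (x*y1) = Dl x*y1 + x*Dl y1 →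
          Dl (x*y2) = Dl x*y2 + x*Dl y2 →
          Dl (x*(y1+y2)) = Dl x*(y1+y2) + x*Dl (y1+y2) := by
        intro x y1 y2 h1 h2
        rw [mul_add, map_add, h1, h2, map_add, mul_add, mul_add]
        abel
      intro x y
      obtain ⟨y1, y2, y3, y4, hy1, hy2, hy3, hy4, hys⟩ :
          ∃ y1 y2 y3 y4 : G, cA e y1 ∧ cM e y2 ∧ cN e y3 ∧ cB e y4 ∧
            y = y1 + y2 + y3 + y4 :=
        ⟨e*y*e, e*y*(1-e), (1-e)*y*e, (1-e)*y*(1-e), cA_sandwich he y,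
          cM_sandwich he y, cN_sandwich he y, cB_sandwich he y, decomp e y⟩
      obtain ⟨x1, x2, x3, x4, hx1, hx2, hx3, hx4, hxs⟩ :
          ∃ x1 x2 x3 x4 : G, cA e x1 ∧ cM e x2 ∧ cN e x3 ∧ cB e x4 ∧
            x = x1 + x2 + x3 + x4 :=
        ⟨e*x*e, e*x*(1-e), (1-e)*x*e, (1-e)*x*(1-e), cA_sandwich he x,
          cM_sandwich he x, cN_sandwich he x, cB_sandwich he x, decomp e x⟩
      have P : ∀ x' : G, (cA e x' ∨ cM e x' ∨ cN e x' ∨ cB e x') →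
          Dl (x' * y) = Dl x' * y + x' * Dl y := by
        intro x' hx'
        rw [hys]
        refine addy _ _ _ (addy _ _ _ (addy _ _ _ ?_ ?_) ?_) ?_
        · exact main x' y1 hx' (Or.inl hy1)
        · exact main x' y2 hx' (Or.inr (Or.inl hy2))
        · exact main x' y3 hx' (Or.inr (Or.inr (Or.inl hy3)))
        · exact main x' y4 hx' (Or.inr (Or.inr (Or.inr hy4)))
      rw [hxs]
      refine addx _ _ _ (addx _ _ _ (addx _ _ _ ?_ ?_) ?_) ?_
      · exact P x1 (Or.inl hx1)
      · exact P x2 (Or.inr (Or.inl hx2))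
      · exact P x3 (Or.inr (Or.inr (Or.inl hx3)))
      · exact P x4 (Or.inr (Or.inr (Or.inr hx4)))
    -- final assembly
    have haduapp : ∀ w : G, adu w = u * w - w * u := fun _ => rfl
    refine ⟨L - τ, τ, ?_, hCtrτ, hτcomm, ?_⟩
    · intro x y
      have hconv : ∀ w : G, (L - τ) w = Dl w + adu w := by
        intro w
        rw [LinearMap.sub_apply, hDlx w, hL1x w, haduapp w]
        abel
      rw [hconv, hconv, hconv, hDer x y, haduder x y]
      noncomm_ring
    · ext w
      rw [LinearMap.add_apply, LinearMap.sub_apply]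
      abel
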